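/- arXiv:2006.10115 — 9 statements merged into one kernel-verified Lean document; each statement's English description precedes it below -/
import Mathlib

section
/- In the FHMS model, the divergence of the vector field multiplied by the Dulac function Ψ(f,m) = 1/(fm) equals the constant -α < 0 on the open first quadrant; consequently (by the Dulac criterion) the system has no periodic orbits lying entirely in the open first quadrant. -/
open intervalIntegral MeasureTheory Set

lemma nonneg_integral_zero_eq_zero {g : ℝ → ℝ} {T : ℝ} (hT : 0 < T)
    (hc : Continuous g) (hnn : ∀ t, 0 ≤ g t)
    (hz : (∫ t in (0:ℝ)..T, g t) = 0) : ∀ t ∈ Set.Icc (0:ℝ) T, g t = 0 := by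
  intro t0 ht0
  by_contra hne
  have hpos : 0 < g t0 := lt_of_le_of_ne (hnn t0) (Ne.symm hne)
  obtain ⟨δ, hδ, hball⟩ : ∃ δ > 0, ∀ s, |s - t0| < δ → g t0 / 2 < g s := by
    obtain ⟨δ, hδ, hd⟩ := Metric.continuousAt_iff.1 hc.continuousAt (g t0 / 2) (by linarith)
    refine ⟨δ, hδ, fun s hs => ?_⟩
    have h2 := hd (x := s) (by simpa [Real.dist_eq] using hs)
    rw [Real.dist_eq] at h2
    have := abs_lt.1 h2
    linarith [this.1, this.2]
  set u := max 0 (t0 - δ/2) with hu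
  set v := min T (t0 + δ/2) with hv
  have hu0 : (0:ℝ) ≤ u := le_max_left _ _
  have hvT : v ≤ T := min_le_left _ _
  have huv : u < v :=
    max_lt (lt_min hT (by linarith [ht0.1])) (lt_min (by linarith [ht0.2]) (by linarith))
  have hmid : 0 < ∫ s in u..v, g s := by
    refine intervalIntegral_pos_of_pos_on (hc.intervalIntegrable u v) (fun x hx => ?_) huv
    have h1 : t0 - δ/2 ≤ u := le_max_right _ _
    have h2 : v ≤ t0 + δ/2 := min_le_right _ _
    have := hball x (by rw [abs_lt]; constructor <;> [linarith [hx.1]; linarith [hx.2]])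
    linarith
  have hsplit : (∫ s in (0:ℝ)..u, g s) + (∫ s in u..v, g s) + (∫ s in v..T, g s)
      = ∫ s in (0:ℝ)..T, g s := by
    rw [integral_add_adjacent_intervals (hc.intervalIntegrable _ _) (hc.intervalIntegrable _ _),
      integral_add_adjacent_intervals (hc.intervalIntegrable _ _) (hc.intervalIntegrable _ _)]
  have h1 : 0 ≤ ∫ s in (0:ℝ)..u, g s := integral_nonneg hu0 (fun x _ => hnn x)
  have h3 : 0 ≤ ∫ s in v..T, g s := integral_nonneg hvT (fun x _ => hnn x)
  rw [hz] at hsplit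
  linarith

lemma fhms_aux (r α h s : ℝ)
    (hr : 0 < r) (hr1 : r < 1) (hα : 0 < α) (hh : 0 ≤ h) (hs1 : s < 1)
    (f m : ℝ → ℝ) (T : ℝ) (hT : 0 < T)
    (hfd : ∀ t, HasDerivAt f (r * α * f t * m t * (1 - f t - m t) - (1 + h) * f t) t)
    (hmd : ∀ t, HasDerivAt m ((1 - r) * α * f t * m t * (1 - f t - m t) + (s - 1) * m t) t)
    (hfpos : ∀ t, 0 < f t) (hmpos : ∀ t, 0 < m t)
    (hpf : ∀ t, f (t + T) = f t) (hpm : ∀ t, m (t + T) = m t) :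
    ∀ t, f t = f 0 ∧ m t = m 0 := by
  -- abbreviations
  set P1 : ℝ → ℝ := fun t => r * α * f t * m t * (1 - f t - m t) - (1 + h) * f t with hP1
  set P2 : ℝ → ℝ := fun t => (1 - r) * α * f t * m t * (1 - f t - m t) + (s - 1) * m t with hP2
  have hcf : Continuous f := continuous_iff_continuousAt.2 fun t => (hfd t).continuousAt
  have hcm : Continuous m := continuous_iff_continuousAt.2 fun t => (hmd t).continuousAt
  have hcP1 : Continuous P1 := by rw [hP1]; fun_prop
  have hcP2 : Continuous P2 := by rw [hP2]; fun_prop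
  have hfT : f T = f 0 := by simpa using hpf 0
  have hmT : m T = m 0 := by simpa using hpm 0
  -- the four moment integrals
  set J := ∫ t in (0:ℝ)..T, f t ^ 2 with hJ
  set K := ∫ t in (0:ℝ)..T, f t * m t with hK
  set L := ∫ t in (0:ℝ)..T, m t ^ 2 with hL
  set X := ∫ t in (0:ℝ)..T, f t ^ 2 * m t * (1 - f t - m t) with hX
  set Y := ∫ t in (0:ℝ)..T, f t * m t ^ 2 * (1 - f t - m t) with hY
  -- generic: integral of derivative of periodic quantity is zero
  have key : ∀ (V e : ℝ → ℝ), (∀ t, HasDerivAt V (e t) t) → Continuous e → V T = V 0 →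
      (∫ t in (0:ℝ)..T, e t) = 0 := by
    intro V e hd hcont hp
    rw [integral_eq_sub_of_hasDerivAt (fun t _ => hd t) (hcont.intervalIntegrable _ _), hp,
      sub_self]
  -- identity A : ∫ f * P1 = 0  gives  r α X = (1+h) J
  have hA : r * α * X - (1 + h) * J = 0 := by
    have h0 : (∫ t in (0:ℝ)..T, (r * α * (f t ^ 2 * m t * (1 - f t - m t)) - (1 + h) * f t ^ 2)) = 0 := by
      refine key (fun u => f u ^ 2 / 2) _ (fun t => ?_) (by fun_prop) (by simp [hfT])
      have hb := ((hfd t).pow 2).div_const 2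
      refine hb.congr_deriv ?_
      push_cast
      ring
    rw [intervalIntegral.integral_sub ((by fun_prop : Continuous fun t => r * α * (f t ^ 2 * m t * (1 - f t - m t))).intervalIntegrable _ _)
      ((by fun_prop : Continuous fun t => (1 + h) * f t ^ 2).intervalIntegrable _ _),
      intervalIntegral.integral_const_mul, intervalIntegral.integral_const_mul] at h0
    rw [hX, hJ]
    exact h0
  -- identity B : ∫ m * P2 = 0  gives  (1-r) α Y = (1-s) L
  have hB : (1 - r) * α * Y + (s - 1) * L = 0 := by
    have h0 : (∫ t in (0:ℝ)..T, ((1 - r) * α * (f t * m t ^ 2 * (1 - f t - m t)) + (s - 1) * m t ^ 2)) = 0 := by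
      refine key (fun u => m u ^ 2 / 2) _ (fun t => ?_) (by fun_prop) (by simp [hmT])
      have hb := ((hmd t).pow 2).div_const 2
      refine hb.congr_deriv ?_
      push_cast
      ring
    rw [intervalIntegral.integral_add ((by fun_prop : Continuous fun t => (1 - r) * α * (f t * m t ^ 2 * (1 - f t - m t))).intervalIntegrable _ _)
      ((by fun_prop : Continuous fun t => (s - 1) * m t ^ 2).intervalIntegrable _ _),
      intervalIntegral.integral_const_mul, intervalIntegral.integral_const_mul] at h0
    rw [hY, hL]
    exact h0
  -- identity D : ∫ (m * P1 + f * P2) = 0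
  have hD : r * α * Y + ((1 - r) * α * X + (-(1 + h) + (s - 1)) * K) = 0 := by
    have h0 : (∫ t in (0:ℝ)..T, (r * α * (f t * m t ^ 2 * (1 - f t - m t)) + ((1 - r) * α * (f t ^ 2 * m t * (1 - f t - m t)) + (-(1 + h) + (s - 1)) * (f t * m t)))) = 0 := by
      refine key (fun u => f u * m u) _ (fun t => ?_) (by fun_prop) (by simp [hfT, hmT])
      have hb := (hfd t).mul (hmd t)
      refine hb.congr_deriv ?_
      ring
    rw [intervalIntegral.integral_add ((by fun_prop : Continuous fun t => r * α * (f t * m t ^ 2 * (1 - f t - m t))).intervalIntegrable _ _)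
      ((by fun_prop : Continuous fun t => (1 - r) * α * (f t ^ 2 * m t * (1 - f t - m t)) + (-(1 + h) + (s - 1)) * (f t * m t)).intervalIntegrable _ _),
      intervalIntegral.integral_add ((by fun_prop : Continuous fun t => (1 - r) * α * (f t ^ 2 * m t * (1 - f t - m t))).intervalIntegrable _ _)
      ((by fun_prop : Continuous fun t => (-(1 + h) + (s - 1)) * (f t * m t)).intervalIntegrable _ _),
      intervalIntegral.integral_const_mul, intervalIntegral.integral_const_mul, intervalIntegral.integral_const_mul] at h0
    rw [hX, hY, hK]
    exact h0
  -- identity C (Dulac) : ∫ α * f * P2 = 0  gives  (1-r) α X = (1-s) K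
  have hC : (1 - r) * α * X + (s - 1) * K = 0 := by
    have h0 : (∫ t in (0:ℝ)..T, (α * ((1 - r) * α * (f t ^ 2 * m t * (1 - f t - m t)) + (s - 1) * (f t * m t)))) = 0 := by
      refine key (fun u => r * α * m u - r * α * (f u * m u) - r * α * m u ^ 2 / 2
        - (1 + h) * Real.log (m u) + α * (f u * m u) - (1 - r) * α * f u
        + (1 - r) * α * f u ^ 2 / 2 + (1 - s) * Real.log (f u)) _ (fun t => ?_) (by fun_prop)
        (by simp [hfT, hmT])
      have lf := hfd t
      have lm := hmd t
      have lfm := lf.mul lm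
      have lf2 := lf.pow 2
      have lm2 := lm.pow 2
      have llf := lf.log (hfpos t).ne'
      have llm := lm.log (hmpos t).ne'
      have hb := (((((((lm.const_mul (r * α)).sub (lfm.const_mul (r * α))).sub
        ((lm2.const_mul (r * α)).div_const 2)).sub (llm.const_mul (1 + h))).add
        (lfm.const_mul α)).sub (lf.const_mul ((1 - r) * α))).add
        ((lf2.const_mul ((1 - r) * α)).div_const 2)).add (llf.const_mul (1 - s))
      refine hb.congr_deriv ?_
      have hf0 : f t ≠ 0 := (hfpos t).ne'
      have hm0 : m t ≠ 0 := (hmpos t).ne'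
      field_simp
      ring
    rw [intervalIntegral.integral_const_mul] at h0
    have h1 := (mul_eq_zero.1 h0).resolve_left hα.ne'
    rw [intervalIntegral.integral_add ((by fun_prop : Continuous fun t => (1 - r) * α * (f t ^ 2 * m t * (1 - f t - m t))).intervalIntegrable _ _)
      ((by fun_prop : Continuous fun t => (s - 1) * (f t * m t)).intervalIntegrable _ _),
      intervalIntegral.integral_const_mul, intervalIntegral.integral_const_mul] at h1
    rw [hX, hK]
    exact h1
  -- algebra: Cauchy-Schwarz equality
  have hE1 : (1 - r) * (1 + h) * J = r * (1 - s) * K := by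
    linear_combination r * hC - (1 - r) * hA
  have hE2 : r * (1 - s) * L = (1 - r) * (1 + h) * K := by
    linear_combination (1 - r) * hD - (1 - r) * hC - r * hB
  have hcpos : (0:ℝ) < r * (1 - s) * ((1 - r) * (1 + h)) :=
    mul_pos (mul_pos hr (by linarith)) (mul_pos (by linarith) (by linarith))
  have hJL : J * L = K * K := by
    have hprod : ((1 - r) * (1 + h) * J) * (r * (1 - s) * L)
        = (r * (1 - s) * K) * ((1 - r) * (1 + h) * K) := by rw [hE1, hE2]
    exact mul_left_cancel₀ hcpos.ne' (by linear_combination hprod)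
  have hJpos : 0 < J := by
    rw [hJ]
    exact intervalIntegral_pos_of_pos
      ((by fun_prop : Continuous fun t => f t ^ 2).intervalIntegrable _ _)
      (fun x => pow_pos (hfpos x) 2) hT
  -- the orbit lies on the line J * m = K * f
  have hZ : (∫ t in (0:ℝ)..T, (J * m t - K * f t) ^ 2) = 0 := by
    have e1 : (∫ t in (0:ℝ)..T, (J * m t - K * f t) ^ 2)
        = ∫ t in (0:ℝ)..T, (J * J * m t ^ 2 - 2 * J * K * (f t * m t) + K * K * f t ^ 2) :=
      integral_congr fun t _ => by ring
    rw [e1, intervalIntegral.integral_add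
        ((by fun_prop : Continuous fun t => J * J * m t ^ 2 - 2 * J * K * (f t * m t)).intervalIntegrable _ _)
        ((by fun_prop : Continuous fun t => K * K * f t ^ 2).intervalIntegrable _ _),
      intervalIntegral.integral_sub
        ((by fun_prop : Continuous fun t => J * J * m t ^ 2).intervalIntegrable _ _)
        ((by fun_prop : Continuous fun t => 2 * J * K * (f t * m t)).intervalIntegrable _ _),
      intervalIntegral.integral_const_mul, intervalIntegral.integral_const_mul, intervalIntegral.integral_const_mul, ← hL, ← hK, ← hJ]
    linear_combination J * hJL
  have hJmKf : ∀ t ∈ Set.Icc (0:ℝ) T, J * m t = K * f t := by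
    intro t ht
    have hz2 := nonneg_integral_zero_eq_zero hT (by fun_prop) (fun t => sq_nonneg _) hZ t ht
    have := (pow_eq_zero_iff two_ne_zero).1 hz2
    linarith
  have hmk : ∀ t ∈ Set.Icc (0:ℝ) T, m t = K / J * f t := by
    intro t ht
    have h1 := hJmKf t ht
    field_simp
    linarith
  -- 1-D autonomous ODE for f on [0,T]
  set g0 : ℝ → ℝ := fun x => r * α * x * (K / J * x) * (1 - x - K / J * x) - (1 + h) * x with hg0
  have hgf : ∀ t ∈ Set.Icc (0:ℝ) T,
      g0 (f t) = r * α * f t * m t * (1 - f t - m t) - (1 + h) * f t := by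
    intro t ht
    simp only [hg0]
    rw [hmk t ht]
  have hΨ : ∀ x : ℝ, HasDerivAt (fun y : ℝ => r * α * (K / J) * (y ^ 3 / 3)
      - r * α * (K / J) * (1 + K / J) * (y ^ 4 / 4) - (1 + h) * (y ^ 2 / 2)) (g0 x) x := by
    intro x
    have h3 : HasDerivAt (fun y : ℝ => y ^ 3) (3 * x ^ 2) x := by simpa using hasDerivAt_pow 3 x
    have h4 : HasDerivAt (fun y : ℝ => y ^ 4) (4 * x ^ 3) x := by simpa using hasDerivAt_pow 4 x
    have h2 : HasDerivAt (fun y : ℝ => y ^ 2) (2 * x) x := by simpa using hasDerivAt_pow 2 x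
    have hb := (((h3.div_const 3).const_mul (r * α * (K / J))).sub
      ((h4.div_const 4).const_mul (r * α * (K / J) * (1 + K / J)))).sub
      ((h2.div_const 2).const_mul (1 + h))
    refine hb.congr_deriv ?_
    simp only [hg0]
    ring
  have hcg0f : Continuous fun t => (g0 (f t)) ^ 2 := by simp only [hg0]; fun_prop
  have hgint : (∫ t in (0:ℝ)..T, (g0 (f t)) ^ 2) = 0 := by
    have hder : ∀ t ∈ Set.uIcc (0:ℝ) T, HasDerivAt ((fun y : ℝ => r * α * (K / J) * (y ^ 3 / 3)
        - r * α * (K / J) * (1 + K / J) * (y ^ 4 / 4) - (1 + h) * (y ^ 2 / 2)) ∘ f)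
        ((g0 (f t)) ^ 2) t := by
      intro t ht
      rw [Set.uIcc_of_le hT.le] at ht
      have hc2 := (hΨ (f t)).comp t (hfd t)
      have he : (g0 (f t)) ^ 2
          = g0 (f t) * (r * α * f t * m t * (1 - f t - m t) - (1 + h) * f t) := by
        rw [hgf t ht]; ring
      rw [he]
      exact hc2
    have hint2 := integral_eq_sub_of_hasDerivAt hder (hcg0f.intervalIntegrable _ _)
    simpa [Function.comp, hfT] using hint2
  have hg0zero : ∀ t ∈ Set.Icc (0:ℝ) T, g0 (f t) = 0 := by
    intro t ht
    have := nonneg_integral_zero_eq_zero hT hcg0f (fun t => sq_nonneg _) hgint t ht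
    exact (pow_eq_zero_iff two_ne_zero).1 this
  -- f, m are constant on [0,T]
  have hfconst : ∀ t ∈ Set.Icc (0:ℝ) T, f t = f 0 := by
    intro t ht
    have hder2 : ∀ u ∈ Set.uIcc (0:ℝ) t, HasDerivAt f (g0 (f u)) u := by
      intro u hu
      rw [Set.uIcc_of_le ht.1] at hu
      have husub : u ∈ Set.Icc (0:ℝ) T := ⟨hu.1, le_trans hu.2 ht.2⟩
      have hd := hfd u
      rw [← hgf u husub] at hd
      exact hd
    have hcg : Continuous fun u => g0 (f u) := by simp only [hg0]; fun_prop
    have hint3 := integral_eq_sub_of_hasDerivAt hder2 (hcg.intervalIntegrable _ _)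
    have hz3 : (∫ u in (0:ℝ)..t, g0 (f u)) = 0 := by
      rw [integral_congr (g := fun _ => (0:ℝ)) (fun u hu => by
        rw [Set.uIcc_of_le ht.1] at hu
        exact hg0zero u ⟨hu.1, le_trans hu.2 ht.2⟩)]
      simp
    rw [hz3] at hint3
    linarith
  have h0mem : (0:ℝ) ∈ Set.Icc (0:ℝ) T := ⟨le_refl 0, hT.le⟩
  have hmconst : ∀ t ∈ Set.Icc (0:ℝ) T, m t = m 0 := by
    intro t ht
    have h1 := hJmKf t ht
    have h2 := hJmKf 0 h0mem
    rw [hfconst t ht] at h1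
    exact mul_left_cancel₀ hJpos.ne' (h1.trans h2.symm)
  -- extend to all of ℝ by periodicity
  intro t
  have hPf : Function.Periodic f T := hpf
  have hPm : Function.Periodic m T := hpm
  have hmem : t - (⌊t / T⌋ : ℤ) * T ∈ Set.Icc (0:ℝ) T :=
    ⟨Int.sub_floor_div_mul_nonneg t hT, (Int.sub_floor_div_mul_lt t hT).le⟩
  constructor
  · have := hfconst _ hmem
    rwa [hPf.sub_int_mul_eq] at this
  · have := hmconst _ hmem
    rwa [hPm.sub_int_mul_eq] at this


/-- FHMS model: Dulac function Ψ = 1/(fm) gives constant divergence -α < 0 on the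
open first quadrant, hence no periodic orbits entirely in the open first quadrant. -/
theorem fhms_dulac_no_periodic_orbits (r α h s : ℝ)
    (hr : 0 < r) (hr1 : r < 1) (hα : 0 < α) (hh : 0 ≤ h) (hs0 : 0 ≤ s) (hs1 : s < 1)
    (F1 F2 : ℝ → ℝ → ℝ)
    (hF1 : ∀ f m, F1 f m = r * α * f * m * (1 - f - m) - (1 + h) * f)
    (hF2 : ∀ f m, F2 f m = (1 - r) * α * f * m * (1 - f - m) + (s - 1) * m) :
    (∀ f m : ℝ, 0 < f → 0 < m →
      deriv (fun x => F1 x m / (x * m)) f + deriv (fun y => F2 f y / (f * y)) m = -α ∧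
      -α < 0) ∧
    ¬ ∃ (γ : ℝ → ℝ × ℝ) (T : ℝ), 0 < T ∧
        (∀ t, HasDerivAt (fun u => (γ u).1) (F1 (γ t).1 (γ t).2) t) ∧
        (∀ t, HasDerivAt (fun u => (γ u).2) (F2 (γ t).1 (γ t).2) t) ∧
        (∀ t, 0 < (γ t).1 ∧ 0 < (γ t).2) ∧
        (∀ t, γ (t + T) = γ t) ∧
        (∃ t₁ t₂, γ t₁ ≠ γ t₂) := by
  constructor
  · intro f m hf hm
    refine ⟨?_, by linarith⟩

    have hd1 : deriv (fun x => F1 x m / (x * m)) f = -(r * α) := by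
      have hev : (fun x => F1 x m / (x * m)) =ᶠ[nhds f] fun x => r * α * (1 - x - m) - (1 + h) / m := by
        filter_upwards [eventually_ne_nhds hf.ne'] with x hx
        rw [hF1]
        field_simp
      rw [hev.deriv_eq]
      have hb : HasDerivAt (fun x : ℝ => r * α * (1 - x - m) - (1 + h) / m) (-(r * α)) f := by
        have h1 : HasDerivAt (fun x : ℝ => 1 - x - m) (-1) f := by
          simpa using ((hasDerivAt_id f).const_sub 1).sub_const m
        have := (h1.const_mul (r * α)).sub_const ((1 + h) / m)
        refine this.congr_deriv ?_
        ring
      exact hb.deriv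
    have hd2 : deriv (fun y => F2 f y / (f * y)) m = -((1 - r) * α) := by
      have hev : (fun y => F2 f y / (f * y)) =ᶠ[nhds m] fun y => (1 - r) * α * (1 - f - y) + (s - 1) / f := by
        filter_upwards [eventually_ne_nhds hm.ne'] with y hy
        rw [hF2]
        field_simp
      rw [hev.deriv_eq]
      have hb : HasDerivAt (fun y : ℝ => (1 - r) * α * (1 - f - y) + (s - 1) / f) (-((1 - r) * α)) m := by
        have h1 : HasDerivAt (fun y : ℝ => 1 - f - y) (-1) m := by
          simpa using ((hasDerivAt_id m).const_sub (1 - f))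
        have := (h1.const_mul ((1 - r) * α)).add_const ((s - 1) / f)
        refine this.congr_deriv ?_
        ring
      exact hb.deriv
    rw [hd1, hd2]
    ring
  · rintro ⟨γ, T, hT, hd1, hd2, hpos, hper, t₁, t₂, hne⟩
    have hconst := fhms_aux r α h s hr hr1 hα hh hs1
      (fun t => (γ t).1) (fun t => (γ t).2) T hT
      (fun t => by simpa [hF1] using hd1 t)
      (fun t => by simpa [hF2] using hd2 t)
      (fun t => (hpos t).1) (fun t => (hpos t).2)
      (fun t => by rw [hper t]) (fun t => by rw [hper t])
    exact hne (Prod.ext ((hconst t₁).1.trans (hconst t₂).1.symm)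
      ((hconst t₁).2.trans (hconst t₂).2.symm))
end

section
/- For the FHMS model with h = 0 and s = 0, the quantity ∂/∂f(F1/(fm)) + ∂/∂m(F2/(fm)) equals -α < 0 everywhere on the open first quadrant, so the system has no limit cycles there. -/
open Set Filter Real

set_option maxHeartbeats 1600000 in
/-- FHMS model with h = 0 and s = 0: the Dulac expression equals -α < 0 on the open
first quadrant, so there are no limit cycles (periodic orbits) there. -/
theorem fhms_h0_s0_dulac_no_limit_cycles (r α : ℝ)
    (hr : 0 < r) (hr1 : r < 1) (hα : 0 < α)
    (F1 F2 : ℝ → ℝ → ℝ)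
    (hF1 : ∀ f m, F1 f m = r * α * f * m * (1 - f - m) - f)
    (hF2 : ∀ f m, F2 f m = (1 - r) * α * f * m * (1 - f - m) - m) :
    (∀ f m : ℝ, 0 < f → 0 < m →
      deriv (fun x => F1 x m / (x * m)) f + deriv (fun y => F2 f y / (f * y)) m = -α ∧
      -α < 0) ∧
    ¬ ∃ (γ : ℝ → ℝ × ℝ) (T : ℝ), 0 < T ∧
        (∀ t, HasDerivAt (fun u => (γ u).1) (F1 (γ t).1 (γ t).2) t) ∧
        (∀ t, HasDerivAt (fun u => (γ u).2) (F2 (γ t).1 (γ t).2) t) ∧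
        (∀ t, 0 < (γ t).1 ∧ 0 < (γ t).2) ∧
        (∀ t, γ (t + T) = γ t) ∧
        (∃ t₁ t₂, γ t₁ ≠ γ t₂) := by
  constructor
  · intro f m hf hm
    refine ⟨?_, by linarith⟩
    have h1 : deriv (fun x => F1 x m / (x * m)) f = -(r * α) := by
      have hev : (fun x => F1 x m / (x * m)) =ᶠ[nhds f]
          (fun x => (-(r * α)) * x + (r * α * (1 - m) - 1 / m)) := by
        filter_upwards [eventually_gt_nhds hf] with x hx
        rw [hF1]
        field_simp
        ring
      rw [hev.deriv_eq]
      have hd : HasDerivAt (fun x => (-(r * α)) * x + (r * α * (1 - m) - 1 / m)) (-(r * α)) f := by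
        simpa using ((hasDerivAt_id f).const_mul (-(r * α))).add_const (r * α * (1 - m) - 1 / m)
      exact hd.deriv
    have h2 : deriv (fun y => F2 f y / (f * y)) m = -((1 - r) * α) := by
      have hev : (fun y => F2 f y / (f * y)) =ᶠ[nhds m]
          (fun y => (-((1 - r) * α)) * y + ((1 - r) * α * (1 - f) - 1 / f)) := by
        filter_upwards [eventually_gt_nhds hm] with y hy
        rw [hF2]
        field_simp
        ring
      rw [hev.deriv_eq]
      have hd : HasDerivAt (fun y => (-((1 - r) * α)) * y + ((1 - r) * α * (1 - f) - 1 / f))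
          (-((1 - r) * α)) m := by
        simpa using ((hasDerivAt_id m).const_mul (-((1 - r) * α))).add_const
          ((1 - r) * α * (1 - f) - 1 / f)
      exact hd.deriv
    rw [h1, h2]; ring
  · rintro ⟨γ, T, hT, hd1, hd2, hpos, hper, ta, tb, hne⟩
    set fp : ℝ → ℝ := fun t => (γ t).1 with hfp
    set mp : ℝ → ℝ := fun t => (γ t).2 with hmp
    set u : ℝ → ℝ := fun t => (1 - r) * fp t - r * mp t with hu_def
    -- u' = -u
    have hu : ∀ t, HasDerivAt u (-(u t)) t := by
      intro t
      have h := ((hd1 t).const_mul (1 - r)).sub ((hd2 t).const_mul r)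
      have heq : (1 - r) * F1 (γ t).1 (γ t).2 - r * F2 (γ t).1 (γ t).2 = -(u t) := by
        rw [hF1, hF2]; simp only [hu_def, hfp, hmp]; ring
      rw [heq] at h
      exact h
    -- u t * exp t is constant
    have hg : ∀ t, HasDerivAt (fun s => u s * Real.exp s) 0 t := by
      intro t
      have h := (hu t).mul (Real.hasDerivAt_exp t)
      have : -(u t) * Real.exp t + u t * Real.exp t = 0 := by ring
      rwa [this] at h
    have hconst : ∀ t, u t * Real.exp t = u 0 * Real.exp 0 := fun t =>
      is_const_of_deriv_eq_zero (fun x => (hg x).differentiableAt)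
        (fun x => (hg x).deriv) t 0
    have huT : u T = u 0 := by
      have h0 := hper 0
      rw [zero_add] at h0
      simp only [hu_def, hfp, hmp, h0]
    have hu0 : u 0 = 0 := by
      have h := hconst T
      rw [huT, Real.exp_zero, mul_one] at h
      have hexp : (1 : ℝ) < Real.exp T := by
        calc (1 : ℝ) = Real.exp 0 := Real.exp_zero.symm
        _ < Real.exp T := Real.exp_lt_exp.mpr hT
      nlinarith
    have huz : ∀ t, u t = 0 := by
      intro t
      have h := hconst t
      rw [hu0, zero_mul] at h
      exact (mul_eq_zero.mp h).resolve_right (Real.exp_ne_zero t)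
    set c : ℝ := (1 - r) / r with hc_def
    have hc : 0 < c := div_pos (by linarith) hr
    have hm_eq : ∀ t, mp t = c * fp t := by
      intro t
      have h := huz t
      simp only [hu_def] at h
      rw [hc_def, div_mul_eq_mul_div, eq_div_iff hr.ne']
      linarith
    set φ : ℝ → ℝ := fun x => r * α * x * (c * x) * (1 - x - c * x) - x with hφ_def
    have hfd : ∀ t, HasDerivAt fp (φ (fp t)) t := by
      intro t
      have h := hd1 t
      have heq : F1 (γ t).1 (γ t).2 = φ (fp t) := by
        rw [hF1, hφ_def]
        have := hm_eq t
        simp only [hmp, hfp] at this ⊢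
        rw [this]
      rwa [heq] at h
    have hfc : Continuous fp := by
      rw [continuous_iff_continuousAt]; exact fun t => (hfd t).continuousAt
    have hperf : Function.Periodic fp T := fun t => by
      simp only [hfp, hper t]
    -- global max of fp
    obtain ⟨t₀, ht₀, hmax⟩ := isCompact_Icc.exists_isMaxOn (α := ℝ) (s := Icc 0 T)
      (nonempty_Icc.mpr hT.le) hfc.continuousOn
    have hglob : ∀ t, fp t ≤ fp t₀ := by
      intro t
      obtain ⟨y, hy, hyeq⟩ := hperf.exists_mem_Ico₀ hT t
      rw [hyeq]
      exact hmax ⟨hy.1, hy.2.le⟩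
    have hφ0 : φ (fp t₀) = 0 :=
      (IsLocalMax.hasDerivAt_eq_zero (Filter.Eventually.of_forall hglob) (hfd t₀))
    -- global bound on |fp|
    obtain ⟨t₂', ht₂', hMx⟩ := isCompact_Icc.exists_isMaxOn (α := ℝ) (s := Icc 0 T)
      (nonempty_Icc.mpr hT.le) (continuous_abs.comp hfc).continuousOn
    set M : ℝ := |fp t₂'| with hM_def
    have hM0 : 0 ≤ M := abs_nonneg _
    have habs : ∀ t, |fp t| ≤ M := by
      intro t
      obtain ⟨y, hy, hyeq⟩ := hperf.exists_mem_Ico₀ hT t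
      calc |fp t| = |fp y| := by rw [hyeq]
      _ ≤ M := hMx ⟨hy.1, hy.2.le⟩
    -- Lipschitz constant
    set A : ℝ := r * α * c with hA_def
    have hA : 0 < A := by positivity
    set B : ℝ := A * (1 + c) with hB_def
    have hB : 0 < B := by positivity
    set C : ℝ := A * (2 * M) + B * (3 * M ^ 2) + 1 with hC_def
    have hC : 0 < C := by positivity
    have hlip : ∀ t : ℝ, LipschitzOnWith C.toNNReal ((fun _ x => φ x) t)
        ((fun _ : ℝ => Icc (-M) M) t) := by
      intro t
      rw [lipschitzOnWith_iff_dist_le_mul]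
      intro x hx y hy
      rw [mem_Icc] at hx hy
      rw [Real.dist_eq, Real.dist_eq, Real.coe_toNNReal _ hC.le]
      have hfact : φ x - φ y = (x - y) * (A * (x + y) - B * (x ^ 2 + x * y + y ^ 2) - 1) := by
        simp only [hφ_def, hA_def, hB_def]; ring
      rw [hfact, abs_mul]
      have hinner : |A * (x + y) - B * (x ^ 2 + x * y + y ^ 2) - 1| ≤ C := by
        rw [abs_le]
        have hq1 : 0 ≤ B * ((M - x) * (M + x)) :=
          mul_nonneg hB.le (mul_nonneg (by linarith [hx.2]) (by linarith [hx.1]))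
        have hq2 : 0 ≤ B * ((M - y) * (M + y)) :=
          mul_nonneg hB.le (mul_nonneg (by linarith [hy.2]) (by linarith [hy.1]))
        have hq3 : 0 ≤ B * ((M - x) * (M - y)) :=
          mul_nonneg hB.le (mul_nonneg (by linarith [hx.2]) (by linarith [hy.2]))
        have hq4 : 0 ≤ B * ((M + x) * (M + y)) :=
          mul_nonneg hB.le (mul_nonneg (by linarith [hx.1]) (by linarith [hy.1]))
        have hq5 : 0 ≤ B * ((M - x) * (M + y)) :=
          mul_nonneg hB.le (mul_nonneg (by linarith [hx.2]) (by linarith [hy.1]))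
        have hq6 : 0 ≤ B * ((M + x) * (M - y)) :=
          mul_nonneg hB.le (mul_nonneg (by linarith [hx.1]) (by linarith [hy.2]))
        have hq7 : 0 ≤ B * ((x + y) ^ 2) := mul_nonneg hB.le (sq_nonneg _)
        have hq8 : 0 ≤ B * (x ^ 2) := mul_nonneg hB.le (sq_nonneg _)
        have hq9 : 0 ≤ B * (y ^ 2) := mul_nonneg hB.le (sq_nonneg _)
        have h5 : 0 ≤ A * (2 * M + x + y) :=
          mul_nonneg hA.le (by linarith [hx.1, hy.1])
        have h6 : 0 ≤ A * (2 * M - x - y) :=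
          mul_nonneg hA.le (by linarith [hx.2, hy.2])
        constructor
        · nlinarith [hq1, hq2, hq3, hq4, hq5, hq6, h5]
        · nlinarith [hq5, hq6, hq7, hq8, hq9, h6]
      calc |x - y| * |A * (x + y) - B * (x ^ 2 + x * y + y ^ 2) - 1|
          ≤ |x - y| * C := mul_le_mul_of_nonneg_left hinner (abs_nonneg _)
        _ = C * |x - y| := mul_comm _ _
    -- uniqueness: fp is constant
    have key : ∀ t, fp t = fp t₀ := by
      intro t
      set R : ℝ := |t - t₀| + 1 with hR_def
      have hR : 0 < R := by positivity
      have hEq := ODE_solution_unique_of_mem_Ioo (v := fun _ x => φ x)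
        (s := fun _ : ℝ => Icc (-M) M) (K := C.toNNReal) (fun τ _ => hlip τ)
        (t₀ := t₀) (a := t₀ - R) (b := t₀ + R) (f := fp) (g := fun _ => fp t₀)
        ⟨by linarith, by linarith⟩
        (fun τ _ => ⟨hfd τ, abs_le.mp (habs τ)⟩)
        (fun τ _ => ⟨by
          show HasDerivAt (fun _ => fp t₀) (φ (fp t₀)) τ
          rw [hφ0]; exact hasDerivAt_const τ _,
          abs_le.mp (habs t₀)⟩)
        rfl
      have ht_mem : t ∈ Ioo (t₀ - R) (t₀ + R) := by
        constructor
        · have := abs_lt.mp (show |t - t₀| < R by simp only [hR_def]; linarith)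
          linarith [this.1]
        · have := abs_lt.mp (show |t - t₀| < R by simp only [hR_def]; linarith)
          linarith [this.2]
      exact hEq ht_mem
    apply hne
    have h1 : (γ ta).1 = (γ tb).1 := by
      show fp ta = fp tb
      rw [key ta, key tb]
    have h2 : (γ ta).2 = (γ tb).2 := by
      show mp ta = mp tb
      rw [hm_eq ta, hm_eq tb, show fp ta = fp tb from h1]
    exact Prod.ext h1 h2
end

section
/- Every interior equilibrium of the FHMS model lies on the ray m = μ f, where μ = (1-r)(1+h)/(r(1-s)), and the f-coordinate satisfies the quadratic (1+μ) f² - f + (1+h)/(r α μ) = 0; hence the interior equilibria are f*_{1,2} = [1 ± sqrt(1 - 4(1+μ)(1+h)/(r α μ))] / (2(1+μ)). -/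
/-- Every interior equilibrium of the FHMS model lies on m = μ f with
(1+μ) f² - f + (1+h)/(rαμ) = 0, hence f is one of the two quadratic roots. -/
theorem fhms_interior_equilibria (r α h s μ : ℝ)
    (hr : 0 < r) (hr1 : r < 1) (hα : 0 < α) (hh : 0 ≤ h) (hs0 : 0 ≤ s) (hs1 : s < 1)
    (hμ : μ = (1 - r) * (1 + h) / (r * (1 - s))) :
    ∀ f m : ℝ, 0 < f → 0 < m →
      r * α * f * m * (1 - f - m) - (1 + h) * f = 0 →
      (1 - r) * α * f * m * (1 - f - m) + (s - 1) * m = 0 →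
      m = μ * f ∧
      (1 + μ) * f ^ 2 - f + (1 + h) / (r * α * μ) = 0 ∧
      (f = (1 + Real.sqrt (1 - 4 * (1 + μ) * (1 + h) / (r * α * μ))) / (2 * (1 + μ)) ∨
       f = (1 - Real.sqrt (1 - 4 * (1 + μ) * (1 + h) / (r * α * μ))) / (2 * (1 + μ))) := by
  intro f m hf hm e1 e2
  have h1r : (0:ℝ) < 1 - r := by linarith
  have h1s : (0:ℝ) < 1 - s := by linarith
  have h1h : (0:ℝ) < 1 + h := by linarith
  have hμpos : 0 < μ := by rw [hμ]; positivity
  have hA : (0:ℝ) < 1 + μ := by linarith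
  have hne : r * α * μ ≠ 0 := by positivity
  have key : (1 + h) * f * (1 - r) = (1 - s) * m * r := by
    linear_combination r * e2 - (1 - r) * e1
  have hmf : m = μ * f := by
    rw [hμ]
    field_simp
    linear_combination -key
  rw [hmf] at e1
  have h2 : r * α * μ * f * (1 - (1 + μ) * f) = 1 + h := by
    have h3 : f * (r * α * μ * f * (1 - (1 + μ) * f)) = f * (1 + h) := by
      linear_combination e1
    exact mul_left_cancel₀ (ne_of_gt hf) h3
  have hq : (1 + μ) * f ^ 2 - f + (1 + h) / (r * α * μ) = 0 := by
    field_simp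
    linear_combination -h2
  refine ⟨hmf, hq, ?_⟩
  set a : ℝ := 1 + μ
  set c : ℝ := (1 + h) / (r * α * μ)
  have hroot : a * (f * f) + (-1) * f + c = 0 := by linear_combination hq
  have hd := discrim_eq_sq_of_quadratic_eq_zero hroot
  have hDnn : 0 ≤ discrim a (-1) c := by rw [hd]; positivity
  have hDval : discrim a (-1) c = 1 - 4 * (1 + μ) * (1 + h) / (r * α * μ) := by
    simp only [discrim, a, c]
    ring
  have hsq : discrim a (-1) c =
      Real.sqrt (1 - 4 * (1 + μ) * (1 + h) / (r * α * μ)) *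
      Real.sqrt (1 - 4 * (1 + μ) * (1 + h) / (r * α * μ)) := by
    rw [hDval, Real.mul_self_sqrt (hDval ▸ hDnn)]
  rcases (quadratic_eq_zero_iff (ne_of_gt hA) hsq f).mp hroot with h | h
  · left; rw [h]; ring
  · right; rw [h]; ring
end

section
/- Two distinct positive interior equilibria of the FHMS model exist if and only if r α μ > 4(1+μ)(1+h), where μ = (1-r)(1+h)/(r(1-s)); equivalently, the discriminant 1 - 4(1+μ)(1+h)/(r α μ) is positive. -/
/-- Helper: positive interior equilibrium implies `m = μ f` and the quadratic. -/
lemma fhms_aux_s5 (r α h s μ f m : ℝ)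
    (hr : 0 < r) (hr1 : r < 1) (hs1 : s < 1) (hh : 0 ≤ h)
    (hkey : r * (1 - s) * μ = (1 - r) * (1 + h))
    (hf : 0 < f) (hm : 0 < m)
    (e1 : r * α * f * m * (1 - f - m) - (1 + h) * f = 0)
    (e2 : (1 - r) * α * f * m * (1 - f - m) + (s - 1) * m = 0) :
    m = μ * f ∧ r * α * μ * (1 + μ) * f ^ 2 - r * α * μ * f + (1 + h) = 0 := by
  have hf' : f ≠ 0 := ne_of_gt hf
  have hm' : m ≠ 0 := ne_of_gt hm
  have h1 : r * α * m * (1 - f - m) - (1 + h) = 0 := by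
    have h0 : (r * α * m * (1 - f - m) - (1 + h)) * f = 0 := by linear_combination e1
    exact (mul_eq_zero.mp h0).resolve_right hf'
  have h2 : (1 - r) * α * f * (1 - f - m) - (1 - s) = 0 := by
    have h0 : ((1 - r) * α * f * (1 - f - m) - (1 - s)) * m = 0 := by linear_combination e2
    exact (mul_eq_zero.mp h0).resolve_right hm'
  have hrs : r * (1 - s) ≠ 0 := by
    have : 0 < r * (1 - s) := mul_pos hr (by linarith)
    exact ne_of_gt this
  have hmf : m = μ * f := by
    have h4 : r * (1 - s) * (m - μ * f) = 0 := by
      linear_combination (1 - r) * f * h1 - r * m * h2 - f * hkey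
    have := (mul_eq_zero.mp h4).resolve_left hrs
    linarith
  refine ⟨hmf, ?_⟩
  subst hmf
  linear_combination (-1 : ℝ) * h1

/-- Helper: a quadratic `a x² - b x + c` with positive coefficients and positive
discriminant has two distinct positive roots. -/
lemma fhms_quad_roots (a b c : ℝ) (ha : 0 < a) (hb : 0 < b) (hc : 0 < c)
    (hD : 0 < b ^ 2 - 4 * a * c) :
    ∃ x y : ℝ, x ≠ y ∧ 0 < x ∧ 0 < y ∧
      a * x ^ 2 - b * x + c = 0 ∧ a * y ^ 2 - b * y + c = 0 := by
  set sd := Real.sqrt (b ^ 2 - 4 * a * c) with hsd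
  have hsd2 : sd ^ 2 = b ^ 2 - 4 * a * c := Real.sq_sqrt hD.le
  have hsdpos : 0 < sd := Real.sqrt_pos.mpr hD
  have hsdlt : sd < b := by nlinarith [Real.sqrt_nonneg (b ^ 2 - 4 * a * c)]
  have h2a : (2 * a) ≠ 0 := by positivity
  refine ⟨(b + sd) / (2 * a), (b - sd) / (2 * a), ?_, ?_, ?_, ?_, ?_⟩
  · have hlt : (b - sd) / (2 * a) < (b + sd) / (2 * a) :=
      div_lt_div_of_pos_right (by linarith) (by positivity)
    exact ne_of_gt hlt
  · exact div_pos (by linarith) (by positivity)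
  · exact div_pos (by linarith) (by positivity)
  · have key : a * ((b + sd) / (2 * a)) ^ 2 - b * ((b + sd) / (2 * a)) + c =
        (sd ^ 2 - (b ^ 2 - 4 * a * c)) / (4 * a) := by
      field_simp
      ring
    rw [key, hsd2, sub_self, zero_div]
  · have key : a * ((b - sd) / (2 * a)) ^ 2 - b * ((b - sd) / (2 * a)) + c =
        (sd ^ 2 - (b ^ 2 - 4 * a * c)) / (4 * a) := by
      field_simp
      ring
    rw [key, hsd2, sub_self, zero_div]

/-- Two distinct positive interior equilibria of the FHMS model exist iff
r α μ > 4(1+μ)(1+h), equivalently the discriminant is positive. -/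
theorem fhms_two_interior_equilibria_iff (r α h s μ : ℝ)
    (hr : 0 < r) (hr1 : r < 1) (hα : 0 < α) (hh : 0 ≤ h) (hs0 : 0 ≤ s) (hs1 : s < 1)
    (hμ : μ = (1 - r) * (1 + h) / (r * (1 - s))) :
    ((∃ p q : ℝ × ℝ, p ≠ q ∧
        (0 < p.1 ∧ 0 < p.2 ∧
          r * α * p.1 * p.2 * (1 - p.1 - p.2) - (1 + h) * p.1 = 0 ∧
          (1 - r) * α * p.1 * p.2 * (1 - p.1 - p.2) + (s - 1) * p.2 = 0) ∧
        (0 < q.1 ∧ 0 < q.2 ∧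
          r * α * q.1 * q.2 * (1 - q.1 - q.2) - (1 + h) * q.1 = 0 ∧
          (1 - r) * α * q.1 * q.2 * (1 - q.1 - q.2) + (s - 1) * q.2 = 0)) ↔
      r * α * μ > 4 * (1 + μ) * (1 + h)) ∧
    (r * α * μ > 4 * (1 + μ) * (1 + h) ↔ 0 < 1 - 4 * (1 + μ) * (1 + h) / (r * α * μ)) := by
  have hs' : 0 < 1 - s := by linarith
  have hrs : 0 < r * (1 - s) := mul_pos hr hs'
  have hμpos : 0 < μ := by
    rw [hμ]
    exact div_pos (mul_pos (by linarith) (by linarith)) hrs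
  have hkey : r * (1 - s) * μ = (1 - r) * (1 + h) := by
    rw [hμ]; field_simp
  have hbpos : 0 < r * α * μ := by positivity
  have hapos : 0 < r * α * μ * (1 + μ) := by positivity
  constructor
  · constructor
    · rintro ⟨p, q, hpq, ⟨hp1, hp2, hpe1, hpe2⟩, hq1, hq2, hqe1, hqe2⟩
      obtain ⟨hmp, hQp⟩ := fhms_aux_s5 r α h s μ p.1 p.2 hr hr1 hs1 hh hkey hp1 hp2 hpe1 hpe2
      obtain ⟨hmq, hQq⟩ := fhms_aux_s5 r α h s μ q.1 q.2 hr hr1 hs1 hh hkey hq1 hq2 hqe1 hqe2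
      have hfpq : p.1 ≠ q.1 := by
        intro hfe
        apply hpq
        have : p.2 = q.2 := by rw [hmp, hmq, hfe]
        exact Prod.ext hfe this
      have hd : p.1 - q.1 ≠ 0 := sub_ne_zero.mpr hfpq
      have hv1 : r * α * μ * (1 + μ) * (p.1 + q.1) - r * α * μ = 0 := by
        have h0 : (r * α * μ * (1 + μ) * (p.1 + q.1) - r * α * μ) * (p.1 - q.1) = 0 := by
          linear_combination hQp - hQq
        exact (mul_eq_zero.mp h0).resolve_right hd
      have hv2 : r * α * μ * (1 + μ) * (p.1 * q.1) - (1 + h) = 0 := by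
        linear_combination p.1 * hv1 - hQp
      have hsq : (r * α * μ * (1 + μ)) ^ 2 * (p.1 - q.1) ^ 2 =
          (r * α * μ) ^ 2 - 4 * (r * α * μ * (1 + μ)) * (1 + h) := by
        linear_combination (r * α * μ * (1 + μ) * (p.1 + q.1) + r * α * μ) * hv1
          - 4 * (r * α * μ * (1 + μ)) * hv2
      have hpos : 0 < (r * α * μ * (1 + μ)) ^ 2 * (p.1 - q.1) ^ 2 := by positivity
      nlinarith [hbpos, hpos, hsq]
    · intro hgt
      have hD : 0 < (r * α * μ) ^ 2 - 4 * (r * α * μ * (1 + μ)) * (1 + h) := by nlinarith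
      obtain ⟨x, y, hxy, hxpos, hypos, hQx, hQy⟩ :=
        fhms_quad_roots (r * α * μ * (1 + μ)) (r * α * μ) (1 + h) hapos hbpos
          (by linarith) hD
      have heqs : ∀ z : ℝ, r * α * μ * (1 + μ) * z ^ 2 - r * α * μ * z + (1 + h) = 0 →
          (r * α * z * (μ * z) * (1 - z - μ * z) - (1 + h) * z = 0 ∧
           (1 - r) * α * z * (μ * z) * (1 - z - μ * z) + (s - 1) * (μ * z) = 0) := by
        intro z hz
        constructor
        · linear_combination (-z) * hz
        · have hrμ : r * μ ≠ 0 := by positivity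
          have h0 : r * μ * ((1 - r) * α * z * (μ * z) * (1 - z - μ * z)
              + (s - 1) * (μ * z)) = 0 := by
            linear_combination (-(1 - r) * μ * z) * hz - (μ * z) * hkey
          exact (mul_eq_zero.mp h0).resolve_left hrμ
      obtain ⟨hx1, hx2⟩ := heqs x hQx
      obtain ⟨hy1, hy2⟩ := heqs y hQy
      exact ⟨(x, μ * x), (y, μ * y),
        fun hpe => hxy (congrArg Prod.fst hpe),
        ⟨hxpos, by positivity, hx1, hx2⟩,
        ⟨hypos, by positivity, hy1, hy2⟩⟩
  · constructor
    · intro hgt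
      have h1 : 4 * (1 + μ) * (1 + h) / (r * α * μ) < 1 := (div_lt_one hbpos).mpr hgt
      linarith
    · intro hlt
      have h1 : 4 * (1 + μ) * (1 + h) / (r * α * μ) < 1 := by linarith
      exact (div_lt_one hbpos).mp h1
end

section
/- The determinant of the Jacobian of the FHMS model at an interior equilibrium E*_i = (f*, μ f*) equals -r(1-r) α² μ f*² (1 - 2(1+μ) f*)(1 - (1+μ) f*); hence E*_i is locally asymptotically stable if and only if (1 - 2(1+μ) f*)(1 - (1+μ) f*) < 0, i.e. 1/(2(1+μ)) < f* < 1/(1+μ). -/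
/-- The determinant of the FHMS Jacobian at an interior equilibrium (f*, μ f*) equals
-r(1-r)α²μ f*²(1-2(1+μ)f*)(1-(1+μ)f*); since the trace is negative, the equilibrium
is locally asymptotically stable iff this determinant is positive, i.e.
1/(2(1+μ)) < f* < 1/(1+μ). -/
theorem fhms_det_and_stability (r α h s μ f : ℝ)
    (hr : 0 < r) (hr1 : r < 1) (hα : 0 < α) (hh : 0 ≤ h) (hs0 : 0 ≤ s) (hs1 : s < 1)
    (hμ : μ = (1 - r) * (1 + h) / (r * (1 - s)))
    (hf : 0 < f)
    (heq1 : r * α * f * (μ * f) * (1 - f - μ * f) - (1 + h) * f = 0)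
    (heq2 : (1 - r) * α * f * (μ * f) * (1 - f - μ * f) + (s - 1) * (μ * f) = 0) :
    Matrix.det
      (!![-(r * α * μ * f ^ 2), r * α * f * (1 - f - 2 * μ * f);
          (1 - r) * α * μ * f * (1 - 2 * f - μ * f), -((1 - r) * α * μ * f ^ 2)] :
        Matrix (Fin 2) (Fin 2) ℝ)
      = -(r * (1 - r) * α ^ 2 * μ * f ^ 2 * (1 - 2 * (1 + μ) * f) * (1 - (1 + μ) * f)) ∧
    (0 < -(r * (1 - r) * α ^ 2 * μ * f ^ 2 * (1 - 2 * (1 + μ) * f) * (1 - (1 + μ) * f)) ↔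
      (1 - 2 * (1 + μ) * f) * (1 - (1 + μ) * f) < 0) ∧
    ((1 - 2 * (1 + μ) * f) * (1 - (1 + μ) * f) < 0 ↔
      1 / (2 * (1 + μ)) < f ∧ f < 1 / (1 + μ)) := by
  have h1r : 0 < 1 - r := by linarith
  have h1s : 0 < 1 - s := by linarith
  have h1h : 0 < 1 + h := by linarith
  have hμpos : 0 < μ := by
    rw [hμ]; exact div_pos (mul_pos h1r h1h) (mul_pos hr h1s)
  have hc : (0:ℝ) < 1 + μ := by linarith
  have hK : 0 < r * (1 - r) * α ^ 2 * μ * f ^ 2 :=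
    mul_pos (mul_pos (mul_pos (mul_pos hr h1r) (pow_pos hα 2)) hμpos) (pow_pos hf 2)
  refine ⟨by simp [Matrix.det_fin_two_of]; ring, ?_, ?_⟩
  · constructor
    · intro hpos
      by_contra hcon
      push_neg at hcon
      nlinarith [mul_nonneg hK.le hcon]
    · intro hneg
      nlinarith [mul_pos hK (neg_pos.mpr hneg)]
  · rw [div_lt_iff₀ (by linarith : (0:ℝ) < 2 * (1 + μ)), lt_div_iff₀ hc]
    constructor
    · intro hprod
      rcases mul_neg_iff.mp hprod with ⟨h1, h2⟩ | ⟨h1, h2⟩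
      · nlinarith
      · constructor <;> nlinarith
    · rintro ⟨h1, h2⟩
      have ha : 1 - 2 * (1 + μ) * f < 0 := by nlinarith
      have hb : 0 < 1 - (1 + μ) * f := by nlinarith
      exact mul_neg_of_neg_of_pos ha hb
end

section
/- In the FHMS model with weak Allee effect, the f-coordinate of any interior equilibrium is a positive root of G(f) = f³ - f²/(1+μ) + (1+h)/(r α μ (1+μ)) = 0, where μ = (1-r)(1+h)/(r(1-s)), and conversely every positive root f* of G with m* = μ f* gives an interior equilibrium. -/
/-- FHMS with weak Allee effect: interior equilibria correspond exactly to positive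
roots of the cubic G(f) = f³ - f²/(1+μ) + (1+h)/(rαμ(1+μ)), with m = μ f. -/
theorem fhms_allee_interior_equilibria_cubic (r α h s μ : ℝ)
    (hr : 0 < r) (hr1 : r < 1) (hα : 0 < α) (hh : 0 ≤ h) (hs0 : 0 ≤ s) (hs1 : s < 1)
    (hμ : μ = (1 - r) * (1 + h) / (r * (1 - s))) :
    (∀ f m : ℝ, 0 < f → 0 < m →
      r * α * f ^ 2 * m * (1 - f - m) - (1 + h) * f = 0 →
      (1 - r) * α * f ^ 2 * m * (1 - f - m) + (s - 1) * m = 0 →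
      m = μ * f ∧
      f ^ 3 - f ^ 2 / (1 + μ) + (1 + h) / (r * α * μ * (1 + μ)) = 0) ∧
    (∀ f : ℝ, 0 < f →
      f ^ 3 - f ^ 2 / (1 + μ) + (1 + h) / (r * α * μ * (1 + μ)) = 0 →
      0 < μ * f ∧
      r * α * f ^ 2 * (μ * f) * (1 - f - μ * f) - (1 + h) * f = 0 ∧
      (1 - r) * α * f ^ 2 * (μ * f) * (1 - f - μ * f) + (s - 1) * (μ * f) = 0) := by
  have hrs : (0:ℝ) < r * (1 - s) := by nlinarith
  have hrne : r ≠ 0 := ne_of_gt hr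
  have hμpos : 0 < μ := by
    rw [hμ]
    exact div_pos (by nlinarith) hrs
  have hμ' : μ * (r * (1 - s)) = (1 - r) * (1 + h) := by
    rw [hμ]; field_simp
    exact mul_div_cancel_right₀ _ (by linarith)
  have h1μ : (0:ℝ) < 1 + μ := by linarith
  have h1μne : (1:ℝ) + μ ≠ 0 := ne_of_gt h1μ
  have hαne : α ≠ 0 := ne_of_gt hα
  have hμne : μ ≠ 0 := ne_of_gt hμpos
  constructor
  · intro f m hf hm h1 h2
    have hfne : f ≠ 0 := ne_of_gt hf
    have hmμ : m = μ * f := by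
      have h0 : r * (1 - s) * (m - μ * f) = 0 := by
        linear_combination (1 - r) * h1 - r * h2 - f * hμ'
      have := (mul_eq_zero.mp h0).resolve_left (ne_of_gt hrs)
      linarith
    refine ⟨hmμ, ?_⟩
    subst hmμ
    have hE : f * (r * α * μ * (1 + μ) * f ^ 3 - r * α * μ * f ^ 2 + (1 + h)) = 0 := by
      linear_combination -h1
    have hE' : r * α * μ * (1 + μ) * f ^ 3 - r * α * μ * f ^ 2 + (1 + h) = 0 :=
      (mul_eq_zero.mp hE).resolve_left hfne
    field_simp
    linear_combination hE'
  · intro f hf hcub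
    have hfne : f ≠ 0 := ne_of_gt hf
    refine ⟨mul_pos hμpos hf, ?_⟩
    have hE : r * α * μ * (1 + μ) * f ^ 3 - r * α * μ * f ^ 2 + (1 + h) = 0 := by
      field_simp at hcub
      have h0 : (1 + μ) * (r * α * μ * (1 + μ) * f ^ 3 - r * α * μ * f ^ 2 + (1 + h)) = 0 := by
        linear_combination (1 + μ) * hcub
      exact (mul_eq_zero.mp h0).resolve_left h1μne
    refine ⟨?_, ?_⟩
    · linear_combination -f * hE
    · have hr2 : r * ((1 - r) * α * f ^ 2 * (μ * f) * (1 - f - μ * f) + (s - 1) * (μ * f)) = 0 := by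
        linear_combination -(1 - r) * f * hE - f * hμ'
      exact (mul_eq_zero.mp hr2).resolve_left hrne
end

section
/- For the FHMS model with weak Allee effect, if 0 ≤ f(0) < 1 then f(t) < 1 for all t ≥ 0; and if f(0) ≥ 1 then f(t) ≤ f(0) for all t ≥ 0. In particular all solutions with nonnegative initial data have bounded f-component. -/
open Set Filter Topology

/-- FHMS with weak Allee effect: the f-component is bounded. If f(0) < 1 then
f(t) < 1 for all t ≥ 0; if f(0) ≥ 1 then f(t) ≤ f(0) for all t ≥ 0. -/
theorem fhms_allee_f_bounded (r α h s : ℝ)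
    (hr : 0 < r) (hr1 : r < 1) (hα : 0 < α) (hh : 0 ≤ h) (hs0 : 0 ≤ s) (hs1 : s < 1)
    (f m : ℝ → ℝ)
    (hf : ∀ t, 0 ≤ t → HasDerivAt f
      (r * α * (f t) ^ 2 * m t * (1 - f t - m t) - (1 + h) * f t) t)
    (hm : ∀ t, 0 ≤ t → HasDerivAt m
      ((1 - r) * α * (f t) ^ 2 * m t * (1 - f t - m t) + (s - 1) * m t) t)
    (hpos : ∀ t, 0 ≤ t → 0 ≤ f t ∧ 0 ≤ m t) :
    (0 ≤ f 0 → f 0 < 1 → ∀ t, 0 ≤ t → f t < 1) ∧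
    (1 ≤ f 0 → ∀ t, 0 ≤ t → f t ≤ f 0) := by
  set F : ℝ → ℝ := fun t => r * α * (f t) ^ 2 * m t * (1 - f t - m t) - (1 + h) * f t with hF
  -- Continuity of f on [0, b] for each b ≥ 0
  have hcont : ∀ b : ℝ, ContinuousOn f (Icc 0 b) := by
    intro b x hx
    exact ((hf x hx.1).continuousAt).continuousWithinAt
  have hder : ∀ b : ℝ, ∀ x ∈ Ico (0:ℝ) b, HasDerivWithinAt f (F x) (Ici x) x := by
    intro b x hx
    exact (hf x hx.1).hasDerivWithinAt
  -- F x < 0 whenever f x ≥ 1 and x ≥ 0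
  have hFneg : ∀ x : ℝ, 0 ≤ x → 1 ≤ f x → F x < 0 := by
    intro x hx hfx
    obtain ⟨hf0, hm0⟩ := hpos x hx
    have h1 : 0 ≤ r * α * (f x) ^ 2 * m x * (f x + m x - 1) := by
      have := mul_pos hr hα
      have h2 : (0:ℝ) ≤ f x + m x - 1 := by linarith
      positivity
    have : F x = -(r * α * (f x) ^ 2 * m x * (f x + m x - 1)) - (1 + h) * f x := by
      simp only [hF]; ring
    rw [this]
    nlinarith
  -- Barrier: if f 0 ≤ C and C ≥ 1, then f ≤ C on [0, b]
  have barrier : ∀ C : ℝ, 1 ≤ C → f 0 ≤ C → ∀ b : ℝ, ∀ x ∈ Icc (0:ℝ) b, f x ≤ C := by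
    intro C hC h0 b
    exact image_le_of_deriv_right_lt_deriv_boundary (f' := F) (B := fun _ => C)
      (B' := fun _ => 0) (hcont b) (hder b) h0 (fun x => hasDerivAt_const x C)
      (fun x hx hfx => hFneg x hx.1 (hfx ▸ hC))
  constructor
  · -- f 0 < 1 → f t < 1
    intro _ h01 t ht
    have hle : ∀ x ∈ Icc (0:ℝ) t, f x ≤ 1 := barrier 1 le_rfl h01.le t
    rcases lt_or_eq_of_le (hle t ⟨ht, le_rfl⟩) with hlt | heq
    · exact hlt
    · -- f t = 1: derivative at t is negative, so f > 1 slightly before t; contradiction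
      exfalso
      have ht0 : 0 < t := by
        rcases ht.lt_or_eq with h' | h'
        · exact h'
        · rw [← h'] at heq; linarith
      have hFt : F t < 0 := hFneg t ht heq.ge
      have hslope : Tendsto (slope f t) (𝓝[≠] t) (𝓝 (F t)) :=
        hasDerivAt_iff_tendsto_slope.mp (hf t ht)
      have hev : ∀ᶠ z in 𝓝[≠] t, slope f t z < 0 :=
        hslope.eventually (eventually_lt_nhds hFt)
      have hlt' : Set.Ioo (0:ℝ) t ∈ 𝓝[<] t := Ioo_mem_nhdsLT_of_mem ⟨ht0, le_rfl⟩
      have hmono : 𝓝[<] t ≤ 𝓝[≠] t := nhdsWithin_mono t fun z hz => ne_of_lt hz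
      have : ∀ᶠ z in 𝓝[<] t, slope f t z < 0 ∧ z ∈ Set.Ioo (0:ℝ) t :=
        (hev.filter_mono hmono).and (eventually_of_mem hlt' fun z hz => hz)
      obtain ⟨z, hz1, hz2⟩ := this.exists
      have hzt : z < t := hz2.2
      have hzne : z - t < 0 := by linarith
      have hdiv : (f z - f t) / (z - t) < 0 := by
        rw [slope_def_field] at hz1; exact hz1
      have hnum : 0 < f z - f t := by
        nlinarith [div_mul_cancel₀ (f z - f t) (show z - t ≠ 0 by linarith),
          mul_pos_of_neg_of_neg hdiv hzne]
      have : f z > 1 := by rw [heq] at hnum; linarith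
      exact absurd (hle z ⟨hz2.1.le, hzt.le⟩) (by linarith)
  · -- f 0 ≥ 1 → f t ≤ f 0
    intro h01 t ht
    exact barrier (f 0) h01 le_rfl t t ⟨ht, le_rfl⟩
end

section
/- At the degenerate interior equilibrium E* = (2/(3(1+μ)), 2μ/(3(1+μ))) of the FHMS model with weak Allee effect (where the two interior equilibria collide), the Jacobian has determinant zero. -/
lemma deriv_aux1 (c m k a : ℝ) :
    deriv (fun x : ℝ => c * x ^ 2 * m * (1 - x - m) - k * x) a
      = c * m * (2 * a * (1 - a - m) - a ^ 2) - k := by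
  have h1 := ((((hasDerivAt_pow 2 a).const_mul c).mul_const m).mul
      (((hasDerivAt_id' (x := a)).const_sub 1).sub_const m)).sub
      ((hasDerivAt_id' (x := a)).const_mul k)
  refine h1.deriv.trans ?_; push_cast; ring

lemma deriv_aux2 (c b k a : ℝ) :
    deriv (fun y : ℝ => c * y * (1 - b - y) + k * y) a
      = c * (1 - b - 2 * a) + k := by
  have h1 := (((hasDerivAt_id' (x := a)).const_mul c).mul
      (((hasDerivAt_const a (1:ℝ)).sub_const b).sub (hasDerivAt_id' (x := a)))).add
      ((hasDerivAt_id' (x := a)).const_mul k)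
  refine h1.deriv.trans ?_; simp only [Pi.sub_apply]; ring

lemma deriv_aux3 (c b d a : ℝ) :
    deriv (fun y : ℝ => c * y * (1 - b - y) - d) a
      = c * (1 - b - 2 * a) := by
  have h1 := ((((hasDerivAt_id' (x := a)).const_mul c).mul
      (((hasDerivAt_const a (1:ℝ)).sub_const b).sub (hasDerivAt_id' (x := a))))).sub_const d
  refine h1.deriv.trans ?_; simp only [Pi.sub_apply]; ring

lemma deriv_aux4 (c m d a : ℝ) :
    deriv (fun x : ℝ => c * x ^ 2 * m * (1 - x - m) + d) a
      = c * m * (2 * a * (1 - a - m) - a ^ 2) := by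
  have h1 := (((((hasDerivAt_pow 2 a).const_mul c).mul_const m).mul
      (((hasDerivAt_id' (x := a)).const_sub 1).sub_const m))).add_const d
  refine h1.deriv.trans ?_; push_cast; ring

/-- FHMS with weak Allee effect: at the degenerate interior equilibrium
E* = (2/(3(1+μ)), 2μ/(3(1+μ))), the Jacobian of the vector field has zero determinant. -/
theorem fhms_allee_degenerate_det_zero (r α h s μ : ℝ)
    (hr : 0 < r) (hr1 : r < 1) (hα : 0 < α) (hh : 0 ≤ h) (hs0 : 0 ≤ s) (hs1 : s < 1)
    (hμ : μ = (1 - r) * (1 + h) / (r * (1 - s)))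
    (hdeg : (1 + h) / (r * α * μ * (1 + μ)) = 4 / (27 * (1 + μ) ^ 3))
    (F1 F2 : ℝ → ℝ → ℝ)
    (hF1 : ∀ f m, F1 f m = r * α * f ^ 2 * m * (1 - f - m) - (1 + h) * f)
    (hF2 : ∀ f m, F2 f m = (1 - r) * α * f ^ 2 * m * (1 - f - m) + (s - 1) * m) :
    Matrix.det
      (!![deriv (fun x => F1 x (2 * μ / (3 * (1 + μ)))) (2 / (3 * (1 + μ))),
          deriv (fun y => F1 (2 / (3 * (1 + μ))) y) (2 * μ / (3 * (1 + μ)));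
          deriv (fun x => F2 x (2 * μ / (3 * (1 + μ)))) (2 / (3 * (1 + μ))),
          deriv (fun y => F2 (2 / (3 * (1 + μ))) y) (2 * μ / (3 * (1 + μ)))] :
        Matrix (Fin 2) (Fin 2) ℝ) = 0 := by
  have hμpos : 0 < μ := by
    rw [hμ]
    exact div_pos (mul_pos (by linarith) (by linarith)) (mul_pos hr (by linarith))
  have ht : (0:ℝ) < 1 + μ := by linarith
  have ht' : (1 + μ) ≠ 0 := ne_of_gt ht
  have hr0 : r ≠ 0 := ne_of_gt hr
  have hα0 : α ≠ 0 := ne_of_gt hα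
  have hμ0 : μ ≠ 0 := ne_of_gt hμpos
  have hs' : (1 - s) ≠ 0 := by intro c; linarith [c]
  have keyH : 1 + h = 4 * r * α * μ / (27 * (1 + μ) ^ 2) := by
    field_simp at hdeg ⊢
    apply mul_right_cancel₀ ht'
    linear_combination (μ + 1) * hdeg
  have keyS : s - 1 = -(4 * (1 - r) * α / (27 * (1 + μ) ^ 2)) := by
    have h2 : μ * (r * (1 - s)) = (1 - r) * (1 + h) := by
      rw [hμ]; field_simp
    rw [keyH] at h2
    field_simp at h2 ⊢
    apply mul_right_cancel₀ (mul_ne_zero hr0 hμ0)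
    linear_combination -(μ * r) * h2
  set f : ℝ := 2 / (3 * (1 + μ)) with hf
  set m : ℝ := 2 * μ / (3 * (1 + μ)) with hm
  have E1 : deriv (fun x => F1 x m) f
      = r * α * m * (2 * f * (1 - f - m) - f ^ 2) - (1 + h) := by
    simp only [hF1]; rw [deriv_aux1]
  have E2 : deriv (fun y => F1 f y) m
      = r * α * f ^ 2 * (1 - f - 2 * m) := by
    simp only [hF1]; rw [deriv_aux3]
  have E3 : deriv (fun x => F2 x m) f
      = (1 - r) * α * m * (2 * f * (1 - f - m) - f ^ 2) := by
    simp only [hF2]; rw [deriv_aux4]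
  have E4 : deriv (fun y => F2 f y) m
      = (1 - r) * α * f ^ 2 * (1 - f - 2 * m) + (s - 1) := by
    simp only [hF2]; rw [deriv_aux2]
  rw [Matrix.det_fin_two_of, E1, E2, E3, E4, keyH, keyS, hf, hm]
  field_simp
  ring
end

section
/- For the FHMS model (no Allee effect), the Jacobian at any interior equilibrium has both diagonal entries strictly negative (J11 = -r α μ f*² < 0 and J22 = -(1-r) α μ f*² < 0); hence the necessary condition for Turing instability (diagonal entries of opposite sign) fails, and the spatially extended FHMS system admits no Turing instability. -/
/-- FHMS (no Allee effect): at any interior equilibrium both diagonal entries of the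
Jacobian are strictly negative, so the necessary condition for Turing instability
(d2 J11 + d1 J22 > 0 for some positive d1, d2) fails. -/
theorem fhms_no_turing_instability (r α h s μ f : ℝ)
    (hr : 0 < r) (hr1 : r < 1) (hα : 0 < α) (hh : 0 ≤ h) (hs0 : 0 ≤ s) (hs1 : s < 1)
    (hμ : μ = (1 - r) * (1 + h) / (r * (1 - s)))
    (hf : 0 < f)
    (heq1 : r * α * f * (μ * f) * (1 - f - μ * f) - (1 + h) * f = 0)
    (heq2 : (1 - r) * α * f * (μ * f) * (1 - f - μ * f) + (s - 1) * (μ * f) = 0)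
    (F1 F2 : ℝ → ℝ → ℝ)
    (hF1 : ∀ x y, F1 x y = r * α * x * y * (1 - x - y) - (1 + h) * x)
    (hF2 : ∀ x y, F2 x y = (1 - r) * α * x * y * (1 - x - y) + (s - 1) * y) :
    deriv (fun x => F1 x (μ * f)) f = -(r * α * μ * f ^ 2) ∧
    deriv (fun y => F2 f y) (μ * f) = -((1 - r) * α * μ * f ^ 2) ∧
    -(r * α * μ * f ^ 2) < 0 ∧
    -((1 - r) * α * μ * f ^ 2) < 0 ∧
    ¬ ∃ d1 d2 : ℝ, 0 < d1 ∧ 0 < d2 ∧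
        0 < d2 * (-(r * α * μ * f ^ 2)) + d1 * (-((1 - r) * α * μ * f ^ 2)) := by
  have hμpos : 0 < μ := by
    rw [hμ]
    apply div_pos <;> nlinarith
  have hkey1 : r * α * (μ * f) * (1 - f - μ * f) = 1 + h := by
    have hmul : (r * α * (μ * f) * (1 - f - μ * f)) * f = (1 + h) * f := by
      nlinarith [heq1]
    exact mul_right_cancel₀ hf.ne' hmul
  have hkey2 : (1 - r) * α * f * (1 - f - μ * f) = 1 - s := by
    have hμf : 0 < μ * f := mul_pos hμpos hf
    have hmul : ((1 - r) * α * f * (1 - f - μ * f)) * (μ * f) = (1 - s) * (μ * f) := by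
      nlinarith [heq2]
    exact mul_right_cancel₀ hμf.ne' hmul
  have hd1 : HasDerivAt (fun x => F1 x (μ * f)) (-(r * α * μ * f ^ 2)) f := by
    have A : HasDerivAt (fun x : ℝ => r * α * x * (μ * f)) (r * α * (μ * f)) f := by
      simpa using ((hasDerivAt_id f).const_mul (r * α)).mul_const (μ * f)
    have B : HasDerivAt (fun x : ℝ => 1 - x - μ * f) (-1) f := by
      simpa using (((hasDerivAt_id f).const_sub 1).sub_const (μ * f))
    have C := (A.mul B).sub ((hasDerivAt_id f).const_mul (1 + h))
    have hfun : (fun x => F1 x (μ * f)) =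
        (fun x : ℝ => r * α * x * (μ * f) * (1 - x - μ * f) - (1 + h) * x) := by
      funext x; rw [hF1]
    rw [hfun]
    refine C.congr_deriv ?_
    nlinarith [hkey1]
  have hd2 : HasDerivAt (fun y => F2 f y) (-((1 - r) * α * μ * f ^ 2)) (μ * f) := by
    have A : HasDerivAt (fun y : ℝ => (1 - r) * α * f * y) ((1 - r) * α * f) (μ * f) := by
      simpa using (hasDerivAt_id (μ * f)).const_mul ((1 - r) * α * f)
    have B : HasDerivAt (fun y : ℝ => 1 - f - y) (-1) (μ * f) := by
      simpa using (hasDerivAt_id (μ * f)).const_sub (1 - f)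
    have C := (A.mul B).add ((hasDerivAt_id (μ * f)).const_mul (s - 1))
    have hfun : (fun y => F2 f y) =
        (fun y : ℝ => (1 - r) * α * f * y * (1 - f - y) + (s - 1) * y) := by
      funext y; rw [hF2]
    rw [hfun]
    refine C.congr_deriv ?_
    nlinarith [hkey2]
  have hA : 0 < r * α * μ * f ^ 2 := by positivity
  have hB : 0 < (1 - r) * α * μ * f ^ 2 := by
    have : 0 < 1 - r := by linarith
    positivity
  refine ⟨hd1.deriv, hd2.deriv, by linarith, by linarith, ?_⟩
  rintro ⟨d1, d2, hd1', hd2', h3⟩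
  nlinarith
end
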